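/- Let R be an associative ring with unity and let M be a two-degree Ding projective left R-module. Then M is a direct summand of a strongly two-degree Ding projective left R-module; in fact, if ··· → D₁ → D₀ →^{δ₀} D₋₁ → ··· is the defining exact sequence with M ≅ ker(δ₀), then ⊕_i ker(δ_i) is strongly two-degree Ding projective and M is a direct summand of it. -/

import Mathlib

universe u

open scoped TensorProduct DirectSum

/-- The subgroup of `E ⊗[ℤ] F` by which one quotients to obtain the balanced tensor
product `E ⊗_R F` of a right `R`-module `E` and a left `R`-module `F`. -/
def balancedSub (R : Type u) [Ring R] (E F : Type u) [AddCommGroup E] [Module Rᵐᵒᵖ E]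
    [AddCommGroup F] [Module R F] : Submodule ℤ (TensorProduct ℤ E F) :=
  Submodule.span ℤ
    {x | ∃ (r : R) (e : E) (f : F),
      x = (MulOpposite.op r • e) ⊗ₜ[ℤ] f - e ⊗ₜ[ℤ] (r • f)}

/-- The tensor product `E ⊗_R F` of a right `R`-module `E` and a left `R`-module `F`
over a possibly noncommutative ring `R`, realized as a quotient of `E ⊗[ℤ] F`. -/
def ModTensor (R : Type u) [Ring R] (E F : Type u) [AddCommGroup E] [Module Rᵐᵒᵖ E]
    [AddCommGroup F] [Module R F] : Type u :=
  TensorProduct ℤ E F ⧸ balancedSub R E F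

noncomputable instance (R : Type u) [Ring R] (E F : Type u) [AddCommGroup E] [Module Rᵐᵒᵖ E]
    [AddCommGroup F] [Module R F] : AddCommGroup (ModTensor R E F) :=
  inferInstanceAs (AddCommGroup (TensorProduct ℤ E F ⧸ balancedSub R E F))

/-- The map `E ⊗_R F → E' ⊗_R F` induced by a map `g : E → E'` of right `R`-modules. -/
noncomputable def ModTensor.mapLeft (R : Type u) [Ring R] {E E' : Type u} [AddCommGroup E]
    [Module Rᵐᵒᵖ E] [AddCommGroup E'] [Module Rᵐᵒᵖ E'] (F : Type u) [AddCommGroup F]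
    [Module R F] (g : E →ₗ[Rᵐᵒᵖ] E') : ModTensor R E F →ₗ[ℤ] ModTensor R E' F :=
  Submodule.mapQ (balancedSub R E F) (balancedSub R E' F)
    (TensorProduct.map (g.restrictScalars ℤ) LinearMap.id)
    (by
      rw [balancedSub, Submodule.span_le]
      rintro x ⟨r, e, f, rfl⟩
      refine Submodule.subset_span ⟨r, g e, f, ?_⟩
      erw [map_sub, TensorProduct.map_tmul, TensorProduct.map_tmul]; simp [map_smul])

/-- The map `E ⊗_R F → E ⊗_R F'` induced by a map `f : F → F'` of left `R`-modules. -/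
noncomputable def ModTensor.mapRight (R : Type u) [Ring R] (E : Type u) [AddCommGroup E]
    [Module Rᵐᵒᵖ E] {F F' : Type u} [AddCommGroup F] [Module R F] [AddCommGroup F']
    [Module R F'] (f : F →ₗ[R] F') : ModTensor R E F →ₗ[ℤ] ModTensor R E F' :=
  Submodule.mapQ (balancedSub R E F) (balancedSub R E F')
    (TensorProduct.map LinearMap.id (f.restrictScalars ℤ))
    (by
      rw [balancedSub, Submodule.span_le]
      rintro x ⟨r, e, y, rfl⟩
      refine Submodule.subset_span ⟨r, e, f y, ?_⟩
      erw [map_sub, TensorProduct.map_tmul, TensorProduct.map_tmul]; simp [map_smul])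

/-- A left module `F` over a (possibly noncommutative) ring `R` is flat if tensoring
with `F` preserves injectivity of maps of right `R`-modules. -/
def IsFlatModule (R : Type u) [Ring R] (F : Type u) [AddCommGroup F] [Module R F] : Prop :=
  ∀ (E E' : Type u) [AddCommGroup E] [Module Rᵐᵒᵖ E] [AddCommGroup E'] [Module Rᵐᵒᵖ E']
    (g : E →ₗ[Rᵐᵒᵖ] E'), Function.Injective g →
      Function.Injective (ModTensor.mapLeft R F g)

/-- `Ext^i_R(M, L) = 0`, expressed using the `Ext` functor on the category of left
`R`-modules (with its `ℤ`-linear structure). -/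
def ExtIsZero (R : Type u) [Ring R] (i : ℕ) (M L : Type u) [AddCommGroup M] [Module R M]
    [AddCommGroup L] [Module R L] : Prop :=
  Subsingleton ((((_root_.Ext ℤ (ModuleCat.{u} R) i).obj
    (Opposite.op (ModuleCat.of R M))).obj (ModuleCat.of R L)) : Type u)

/-- `FlatDimLE R n L` means the left `R`-module `L` admits a flat resolution of
length at most `n`. -/
def FlatDimLE (R : Type u) [Ring R] : ℕ → ModuleCat.{u} R → Prop
  | 0, L => IsFlatModule R L
  | n + 1, L =>
    ∃ (F K : ModuleCat.{u} R) (ι : (K : Type u) →ₗ[R] F) (π : (F : Type u) →ₗ[R] L),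
      IsFlatModule R F ∧ Function.Injective ι ∧ Function.Surjective π ∧
      Function.Exact ι π ∧ FlatDimLE R n K

/-- A left `R`-module `L` has finite flat dimension if it admits a finite resolution
by flat modules. -/
def HasFiniteFlatDimension (R : Type u) [Ring R] (L : Type u) [AddCommGroup L]
    [Module R L] : Prop :=
  ∃ n : ℕ, FlatDimLE R n (ModuleCat.of R L)

/-- A left `R`-module `M` is Ding projective if there is an exact sequence
`⋯ → P₁ → P₀ → P₋₁ → P₋₂ → ⋯` of projective modules with `M ≅ ker (P₀ → P₋₁)`
which stays exact under `Hom_R(-, F)` for every flat module `F`. -/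
def IsDingProjective (R : Type u) [Ring R] (M : Type u) [AddCommGroup M] [Module R M] : Prop :=
  ∃ (P : ℤ → ModuleCat.{u} R) (d : ∀ n : ℤ, (P (n + 1) : Type u) →ₗ[R] P n),
    (∀ n, Module.Projective R (P n)) ∧
    (∀ n, Function.Exact (d (n + 1)) (d n)) ∧
    (∀ (F : Type u) [AddCommGroup F] [Module R F], IsFlatModule R F →
      ∀ n : ℤ, Function.Exact
        (fun g : (P n : Type u) →ₗ[R] F => g ∘ₗ d n)
        (fun g : (P (n + 1) : Type u) →ₗ[R] F => g ∘ₗ d (n + 1))) ∧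
    Nonempty (M ≃ₗ[R] LinearMap.ker (d (-1)))

/-- A left `R`-module `M` is two-degree Ding projective if there is an exact sequence
`⋯ → D₁ → D₀ → D₋₁ → D₋₂ → ⋯` of Ding projective modules with `M ≅ ker (D₀ → D₋₁)`
which stays exact under `Hom_R(-, F)` for every flat module `F`. -/
def IsTwoDegreeDingProjective (R : Type u) [Ring R] (M : Type u) [AddCommGroup M]
    [Module R M] : Prop :=
  ∃ (D : ℤ → ModuleCat.{u} R) (d : ∀ n : ℤ, (D (n + 1) : Type u) →ₗ[R] D n),
    (∀ n, IsDingProjective R (D n)) ∧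
    (∀ n, Function.Exact (d (n + 1)) (d n)) ∧
    (∀ (F : Type u) [AddCommGroup F] [Module R F], IsFlatModule R F →
      ∀ n : ℤ, Function.Exact
        (fun g : (D n : Type u) →ₗ[R] F => g ∘ₗ d n)
        (fun g : (D (n + 1) : Type u) →ₗ[R] F => g ∘ₗ d (n + 1))) ∧
    Nonempty (M ≃ₗ[R] LinearMap.ker (d (-1)))

/-- A left `R`-module `M` is strongly two-degree Ding projective if there is an exact
sequence `⋯ →f D →f D →f D →f ⋯` with `D` Ding projective and a single map `f`, with
`M ≅ ker f`, which stays exact under `Hom_R(-, F)` for every flat module `F`. -/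
def IsStronglyTwoDegreeDingProjective (R : Type u) [Ring R] (M : Type u) [AddCommGroup M]
    [Module R M] : Prop :=
  ∃ (D : ModuleCat.{u} R) (f : (D : Type u) →ₗ[R] D),
    IsDingProjective R D ∧
    Function.Exact f f ∧
    (∀ (F : Type u) [AddCommGroup F] [Module R F], IsFlatModule R F →
      Function.Exact
        (fun g : (D : Type u) →ₗ[R] F => g ∘ₗ f)
        (fun g : (D : Type u) →ₗ[R] F => g ∘ₗ f)) ∧
    Nonempty (M ≃ₗ[R] LinearMap.ker f)

/-- A left `R`-module `M` is Gorenstein projective if there is an exact sequence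
`⋯ → P₁ → P₀ → P₋₁ → P₋₂ → ⋯` of projective modules with `M ≅ ker (P₀ → P₋₁)`
which stays exact under `Hom_R(-, Q)` for every projective module `Q`. -/
def IsGorensteinProjective (R : Type u) [Ring R] (M : Type u) [AddCommGroup M]
    [Module R M] : Prop :=
  ∃ (P : ℤ → ModuleCat.{u} R) (d : ∀ n : ℤ, (P (n + 1) : Type u) →ₗ[R] P n),
    (∀ n, Module.Projective R (P n)) ∧
    (∀ n, Function.Exact (d (n + 1)) (d n)) ∧
    (∀ (Q : Type u) [AddCommGroup Q] [Module R Q], Module.Projective R Q →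
      ∀ n : ℤ, Function.Exact
        (fun g : (P n : Type u) →ₗ[R] Q => g ∘ₗ d n)
        (fun g : (P (n + 1) : Type u) →ₗ[R] Q => g ∘ₗ d (n + 1))) ∧
    Nonempty (M ≃ₗ[R] LinearMap.ker (d (-1)))

/-- A left `R`-module `H` is Gorenstein flat if there is an exact sequence
`⋯ → F₁ → F₀ → F₋₁ → F₋₂ → ⋯` of flat modules with `H ≅ ker (F₀ → F₋₁)` which stays
exact under `E ⊗_R -` for every injective right `R`-module `E`. -/
def IsGorensteinFlat (R : Type u) [Ring R] (H : Type u) [AddCommGroup H] [Module R H] : Prop :=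
  ∃ (F : ℤ → ModuleCat.{u} R) (d : ∀ n : ℤ, (F (n + 1) : Type u) →ₗ[R] F n),
    (∀ n, IsFlatModule R (F n)) ∧
    (∀ n, Function.Exact (d (n + 1)) (d n)) ∧
    (∀ (E : Type u) [AddCommGroup E] [Module Rᵐᵒᵖ E], Module.Injective Rᵐᵒᵖ E →
      ∀ n : ℤ, Function.Exact
        (ModTensor.mapRight R E (d (n + 1)))
        (ModTensor.mapRight R E (d n))) ∧
    Nonempty (H ≃ₗ[R] LinearMap.ker (d (-1)))

/-- A left `R`-module `E` is FP-injective if `Ext¹_R(F, E) = 0` for every finitely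
presented module `F`. -/
def IsFPInjective (R : Type u) [Ring R] (E : Type u) [AddCommGroup E] [Module R E] : Prop :=
  ∀ (F : Type u) [AddCommGroup F] [Module R F], Module.FinitePresentation R F →
    ExtIsZero R 1 F E

/-- A left `R`-module `M` is Ding injective if there is an exact sequence
`⋯ → E₁ → E₀ → E₋₁ → E₋₂ → ⋯` of injective modules with `M ≅ ker (E₀ → E₋₁)`
which stays exact under `Hom_R(H, -)` for every FP-injective module `H`. -/
def IsDingInjective (R : Type u) [Ring R] (M : Type u) [AddCommGroup M] [Module R M] : Prop :=
  ∃ (E : ℤ → ModuleCat.{u} R) (d : ∀ n : ℤ, (E (n + 1) : Type u) →ₗ[R] E n),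
    (∀ n, Module.Injective R (E n)) ∧
    (∀ n, Function.Exact (d (n + 1)) (d n)) ∧
    (∀ (H : Type u) [AddCommGroup H] [Module R H], IsFPInjective R H →
      ∀ n : ℤ, Function.Exact
        (fun g : H →ₗ[R] (E (n + 1 + 1) : Type u) => d (n + 1) ∘ₗ g)
        (fun g : H →ₗ[R] (E (n + 1) : Type u) => d n ∘ₗ g)) ∧
    Nonempty (M ≃ₗ[R] LinearMap.ker (d (-1)))

/-- A left `R`-module `M` is two-degree Ding injective if there is an exact sequence
`⋯ → D₁ → D₀ → D₋₁ → D₋₂ → ⋯` of Ding injective modules with `M ≅ ker (D₀ → D₋₁)`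
which stays exact under `Hom_R(H, -)` for every FP-injective module `H`. -/
def IsTwoDegreeDingInjective (R : Type u) [Ring R] (M : Type u) [AddCommGroup M]
    [Module R M] : Prop :=
  ∃ (D : ℤ → ModuleCat.{u} R) (d : ∀ n : ℤ, (D (n + 1) : Type u) →ₗ[R] D n),
    (∀ n, IsDingInjective R (D n)) ∧
    (∀ n, Function.Exact (d (n + 1)) (d n)) ∧
    (∀ (H : Type u) [AddCommGroup H] [Module R H], IsFPInjective R H →
      ∀ n : ℤ, Function.Exact
        (fun g : H →ₗ[R] (D (n + 1 + 1) : Type u) => d (n + 1) ∘ₗ g)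
        (fun g : H →ₗ[R] (D (n + 1) : Type u) => d n ∘ₗ g)) ∧
    Nonempty (M ≃ₗ[R] LinearMap.ker (d (-1)))


namespace DingAux

variable {R : Type u} [Ring R]

section DFinsuppLemmas

variable {ι : Type} [DecidableEq ι]

theorem mapRange_linearMap_apply' {β₁ β₂ : ι → Type u}
    [∀ i, AddCommGroup (β₁ i)] [∀ i, Module R (β₁ i)]
    [∀ i, AddCommGroup (β₂ i)] [∀ i, Module R (β₂ i)]
    (f : ∀ i, β₁ i →ₗ[R] β₂ i) (x : Π₀ i, β₁ i) :
    DFinsupp.mapRange.linearMap f x =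
      DFinsupp.mapRange (fun i y => f i y) (fun i => (f i).map_zero) x := rfl

/-- Exactness of componentwise maps of direct sums. -/
theorem mapRange_exact {β₁ β₂ β₃ : ι → Type u}
    [∀ i, AddCommGroup (β₁ i)] [∀ i, Module R (β₁ i)]
    [∀ i, AddCommGroup (β₂ i)] [∀ i, Module R (β₂ i)]
    [∀ i, AddCommGroup (β₃ i)] [∀ i, Module R (β₃ i)]
    (f : ∀ i, β₁ i →ₗ[R] β₂ i) (g : ∀ i, β₂ i →ₗ[R] β₃ i)
    (h : ∀ i, Function.Exact (f i) (g i)) :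
    Function.Exact (DFinsupp.mapRange.linearMap f) (DFinsupp.mapRange.linearMap g) := by
  classical
  intro y
  constructor
  · intro hy
    have hy' : ∀ i, g i (y i) = 0 := by
      intro i
      have := DFinsupp.ext_iff.mp hy i
      simpa [DingAux.mapRange_linearMap_apply', DFinsupp.mapRange_apply] using this
    have hex : ∀ i, ∃ a : β₁ i, f i a = y i := fun i => (h i (y i)).mp (hy' i)
    choose a ha using hex
    refine ⟨DFinsupp.mk y.support (fun i => a i), ?_⟩
    ext i
    by_cases hi : i ∈ y.support
    · simp [DingAux.mapRange_linearMap_apply', DFinsupp.mapRange_apply, DFinsupp.mk_apply, hi, ha]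
    · have : y i = 0 := by simpa using DFinsupp.notMem_support_iff.mp hi
      simp [DingAux.mapRange_linearMap_apply', DFinsupp.mapRange_apply, DFinsupp.mk_apply, hi, this]
  · rintro ⟨x, rfl⟩
    ext i
    simp [DingAux.mapRange_linearMap_apply', DFinsupp.mapRange_apply,
      (h i).apply_apply_eq_zero]

/-- Hom-exactness is preserved by direct sums. -/
theorem mapRange_hom_exact {X Y Z : ι → Type u}
    [∀ i, AddCommGroup (X i)] [∀ i, Module R (X i)]
    [∀ i, AddCommGroup (Y i)] [∀ i, Module R (Y i)]
    [∀ i, AddCommGroup (Z i)] [∀ i, Module R (Z i)]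
    (F : Type u) [AddCommGroup F] [Module R F]
    (a : ∀ i, Y i →ₗ[R] X i) (b : ∀ i, Z i →ₗ[R] Y i)
    (hab : ∀ i, (a i) ∘ₗ (b i) = 0)
    (h : ∀ i, Function.Exact
      (fun g : X i →ₗ[R] F => g ∘ₗ a i)
      (fun g : Y i →ₗ[R] F => g ∘ₗ b i)) :
    Function.Exact
      (fun g : (Π₀ i, X i) →ₗ[R] F => g ∘ₗ DFinsupp.mapRange.linearMap a)
      (fun g : (Π₀ i, Y i) →ₗ[R] F => g ∘ₗ DFinsupp.mapRange.linearMap b) := by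
  classical
  intro g
  constructor
  · intro hg
    have hgi : ∀ i, (g ∘ₗ DFinsupp.lsingle i) ∘ₗ b i = 0 := by
      intro i
      ext z
      have := DFunLike.congr_fun hg (DFinsupp.single i z)
      simpa [DingAux.mapRange_linearMap_apply', DFinsupp.mapRange_single] using this
    have hexi : ∀ i, ∃ hi : X i →ₗ[R] F, hi ∘ₗ a i = g ∘ₗ DFinsupp.lsingle i :=
      fun i => (h i (g ∘ₗ DFinsupp.lsingle i)).mp (hgi i)
    choose hi hhi using hexi
    refine ⟨DFinsupp.lsum ℕ hi, ?_⟩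
    apply DFinsupp.lhom_ext
    intro i y
    have h1 : (DFinsupp.mapRange.linearMap a) (DFinsupp.single i y) =
        DFinsupp.single i (a i y) := by
      simp [DingAux.mapRange_linearMap_apply', DFinsupp.mapRange_single]
    simp only [LinearMap.comp_apply, h1, DFinsupp.lsum_single]
    exact DFunLike.congr_fun (hhi i) y
  · rintro ⟨H, rfl⟩
    apply DFinsupp.lhom_ext
    intro i z
    have h1 : (DFinsupp.mapRange.linearMap b) (DFinsupp.single i z) =
        DFinsupp.single i (b i z) := by
      simp [DingAux.mapRange_linearMap_apply', DFinsupp.mapRange_single]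
    have h2 : (DFinsupp.mapRange.linearMap a) (DFinsupp.single i (b i z)) =
        DFinsupp.single i ((a i) ((b i) z)) := by
      simp [DingAux.mapRange_linearMap_apply', DFinsupp.mapRange_single]
    have h3 : (a i) ((b i) z) = 0 := DFunLike.congr_fun (hab i) z
    simp [LinearMap.comp_apply, h1, h2, h3]

/-- The kernel of a componentwise map of direct sums is the direct sum of kernels. -/
noncomputable def kerMapRangeEquiv {β₁ β₂ : ι → Type u}
    [∀ i, AddCommGroup (β₁ i)] [∀ i, Module R (β₁ i)]
    [∀ i, AddCommGroup (β₂ i)] [∀ i, Module R (β₂ i)]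
    (u : ∀ i, β₁ i →ₗ[R] β₂ i) :
    (Π₀ i, ↥(LinearMap.ker (u i))) ≃ₗ[R]
      ↥(LinearMap.ker (DFinsupp.mapRange.linearMap u)) := by
  classical
  refine LinearEquiv.ofBijective
    (LinearMap.codRestrict (LinearMap.ker (DFinsupp.mapRange.linearMap u))
      (DFinsupp.mapRange.linearMap (fun i => (LinearMap.ker (u i)).subtype)) ?_) ⟨?_, ?_⟩
  · intro x
    rw [LinearMap.mem_ker]
    ext i
    have h1 : ∀ (w : Π₀ i, β₁ i) (i : ι), (DFinsupp.mapRange.linearMap u) w i = u i (w i) := by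
      intro w i; simp [DingAux.mapRange_linearMap_apply', DFinsupp.mapRange_apply]
    rw [h1]
    have h2 : (DFinsupp.mapRange.linearMap (fun i => (LinearMap.ker (u i)).subtype) x) i
        = (x i : β₁ i) := by
      simp [DingAux.mapRange_linearMap_apply', DFinsupp.mapRange_apply]
    rw [h2]
    simpa using (x i).2
  · intro x y hxy
    have := congrArg Subtype.val hxy
    ext i
    have h := DFinsupp.ext_iff.mp this i
    simp only [DFinsupp.mapRange.linearMap, LinearMap.coe_mk, AddHom.coe_mk,
      DFinsupp.mapRange_apply] at h
    exact h
  · rintro ⟨y, hy⟩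
    rw [LinearMap.mem_ker] at hy
    have hy' : ∀ i, y i ∈ LinearMap.ker (u i) := by
      intro i
      have := DFinsupp.ext_iff.mp hy i
      simpa [DingAux.mapRange_linearMap_apply', DFinsupp.mapRange_apply] using this
    refine ⟨DFinsupp.mk y.support (fun i => ⟨y i, hy' i⟩), ?_⟩
    apply Subtype.ext
    simp only [LinearMap.codRestrict_apply]
    ext i
    by_cases hi : i ∈ y.support
    · simp [DingAux.mapRange_linearMap_apply', DFinsupp.mapRange_apply, DFinsupp.mk_apply, hi]
    · have : y i = 0 := by simpa using DFinsupp.notMem_support_iff.mp hi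
      simp [DingAux.mapRange_linearMap_apply', DFinsupp.mapRange_apply, DFinsupp.mk_apply, hi, this]

end DFinsuppLemmas

end DingAux
section DingAuxMore

variable {R : Type u} [Ring R]

/-- A direct sum of Ding projective modules is Ding projective. -/
theorem isDingProjective_directSum {ι : Type} [DecidableEq ι]
    (M : ι → ModuleCat.{u} R) (h : ∀ i, IsDingProjective R (M i)) :
    IsDingProjective R (⨁ i, (M i : Type u)) := by
  classical
  choose P dP hproj hexx hhomm hker using h
  refine ⟨fun k => ModuleCat.of R (⨁ i, (P i k : Type u)),
    fun k => DFinsupp.mapRange.linearMap (fun i => dP i k), ?_, ?_, ?_, ?_⟩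
  · intro k
    haveI : ∀ i, Module.Projective R (P i k) := fun i => hproj i k
    exact inferInstanceAs (Module.Projective R (Π₀ i, (P i k : Type u)))
  · intro n
    exact DingAux.mapRange_exact (fun i => dP i (n + 1)) (fun i => dP i n)
      (fun i => hexx i n)
  · intro F _ _ hF n
    exact DingAux.mapRange_hom_exact F (fun i => dP i n) (fun i => dP i (n + 1))
      (fun i => LinearMap.ext fun z => (hexx i n).apply_apply_eq_zero z)
      (fun i => hhomm i F hF n)
  · exact ⟨(DFinsupp.mapRange.linearEquiv
      (fun i => Classical.choice (hker i))).trans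
      (DingAux.kerMapRangeEquiv (fun i => dP i (-1)))⟩

variable (D : ℤ → ModuleCat.{u} R)

/-- Cast along an equality of indices. -/
def castM : ∀ {a b : ℤ}, a = b → ((D a : Type u) →ₗ[R] (D b : Type u))
  | _, _, rfl => LinearMap.id

theorem castM_fam {N : Type u} [AddCommGroup N] [Module R N]
    (Φ : ∀ a : ℤ, (D a : Type u) →ₗ[R] N) {a b : ℤ} (h : a = b) (y : (D a : Type u)) :
    Φ b (castM D h y) = Φ a y := by subst h; rfl

theorem castM_fam' {N : Type u} [AddCommGroup N] [Module R N]
    (Φ : ∀ a : ℤ, (D (a + 1) : Type u) →ₗ[R] N) {a b : ℤ} (h : a + 1 = b + 1)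
    (y : (D (a + 1) : Type u)) :
    Φ b (castM D h y) = Φ a y := by
  have hb : b = a := by omega
  subst hb; rfl

variable (d : ∀ n : ℤ, (D (n + 1) : Type u) →ₗ[R] D n)

/-- The componentwise map `⨁ₙ D (n+1) → ⨁ₙ D n`. -/
noncomputable def sumD : (⨁ n : ℤ, (D (n + 1) : Type u)) →ₗ[R] ⨁ n : ℤ, (D n : Type u) :=
  DFinsupp.mapRange.linearMap d

/-- The reindexing map `⨁ₙ D n → ⨁ₙ D (n+1)`. -/
noncomputable def shiftL : (⨁ n : ℤ, (D n : Type u)) →ₗ[R] ⨁ n : ℤ, (D (n + 1) : Type u) :=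
  DirectSum.toModule R ℤ _ (fun m =>
    (DirectSum.lof R ℤ (fun n => (D (n + 1) : Type u)) (m - 1)) ∘ₗ
      castM D (show m = m - 1 + 1 by ring))

/-- The inverse reindexing map `⨁ₙ D (n+1) → ⨁ₙ D n`. -/
noncomputable def unshiftL : (⨁ n : ℤ, (D (n + 1) : Type u)) →ₗ[R] ⨁ n : ℤ, (D n : Type u) :=
  DirectSum.toModule R ℤ _ (fun m => DirectSum.lof R ℤ (fun n => (D n : Type u)) (m + 1))

theorem shiftL_lof (m : ℤ) (x : (D m : Type u)) :
    shiftL D (DirectSum.lof R ℤ (fun n => (D n : Type u)) m x) =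
      DirectSum.lof R ℤ (fun n => (D (n + 1) : Type u)) (m - 1)
        (castM D (show m = m - 1 + 1 by ring) x) := by
  rw [shiftL, DirectSum.toModule_lof]; rfl

theorem unshiftL_lof (m : ℤ) (x : (D (m + 1) : Type u)) :
    unshiftL D (DirectSum.lof R ℤ (fun n => (D (n + 1) : Type u)) m x) =
      DirectSum.lof R ℤ (fun n => (D n : Type u)) (m + 1) x := by
  rw [unshiftL, DirectSum.toModule_lof]

theorem unshiftL_shiftL : unshiftL D ∘ₗ shiftL D = LinearMap.id := by
  apply DirectSum.linearMap_ext
  intro m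
  ext x : 1
  simp only [LinearMap.comp_apply, LinearMap.id_apply]
  rw [shiftL_lof, unshiftL_lof]
  exact castM_fam D (fun a => DirectSum.lof R ℤ (fun n => (D n : Type u)) a) _ x

theorem shiftL_eq_zero {x : ⨁ n : ℤ, (D n : Type u)} (h : shiftL D x = 0) : x = 0 := by
  have h1 := DFunLike.congr_fun (unshiftL_shiftL D) x
  simp only [LinearMap.comp_apply, LinearMap.id_apply] at h1
  rw [h] at h1
  simpa using h1.symm

/-- The one-degree shift map on `⨁ₙ D (n+1)` built from the differentials. -/
noncomputable def fShift : (⨁ n : ℤ, (D (n + 1) : Type u)) →ₗ[R] ⨁ n : ℤ, (D (n + 1) : Type u) :=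
  shiftL D ∘ₗ sumD D d

theorem sumD_lof (m : ℤ) (x : (D (m + 1) : Type u)) :
    sumD D d (DirectSum.lof R ℤ (fun n => (D (n + 1) : Type u)) m x) =
      DirectSum.lof R ℤ (fun n => (D n : Type u)) m (d m x) := by
  change DFinsupp.mapRange.linearMap d (DFinsupp.single m x) = DFinsupp.single m (d m x)
  simp [DingAux.mapRange_linearMap_apply', DFinsupp.mapRange_single]

theorem fShift_lof_succ (k : ℤ) (x : (D (k + 1 + 1) : Type u)) :
    fShift D d (DirectSum.lof R ℤ (fun n => (D (n + 1) : Type u)) (k + 1) x) =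
      DirectSum.lof R ℤ (fun n => (D (n + 1) : Type u)) k (d (k + 1) x) := by
  rw [fShift, LinearMap.comp_apply, sumD_lof, shiftL_lof]
  exact castM_fam' D (fun a => DirectSum.lof R ℤ (fun n => (D (n + 1) : Type u)) a) _ _

theorem fShift_sq_zero (hex : ∀ n : ℤ, Function.Exact (d (n + 1)) (d n)) :
    fShift D d ∘ₗ fShift D d = 0 := by
  apply DirectSum.linearMap_ext
  intro m
  ext u
  obtain ⟨k, rfl⟩ : ∃ k, m = k + 1 := ⟨m - 1, by ring⟩
  obtain ⟨j, rfl⟩ : ∃ j, k = j + 1 := ⟨k - 1, by ring⟩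
  simp only [LinearMap.comp_apply, LinearMap.zero_apply]
  rw [fShift_lof_succ D d (j + 1) u, fShift_lof_succ D d j]
  rw [(hex (j + 1)).apply_apply_eq_zero u]
  simp

/-- Component extraction: if `sumD y = 0` then each `d n (y n) = 0`. -/
theorem sumD_comp_eq_zero {y : ⨁ n : ℤ, (D (n + 1) : Type u)} (h : sumD D d y = 0)
    (n : ℤ) : d n (y n) = 0 := by
  have h1 := DFunLike.congr_fun h n
  change DFinsupp.mapRange.linearMap d y n = (0 : Π₀ n, (D n : Type u)) n at h1
  simpa [sumD, DingAux.mapRange_linearMap_apply', DFinsupp.mapRange_apply] using h1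

theorem fShift_exact (hex : ∀ n : ℤ, Function.Exact (d (n + 1)) (d n)) :
    Function.Exact (fShift D d) (fShift D d) := by
  classical
  intro y
  constructor
  · intro hy
    have hGy : sumD D d y = 0 := shiftL_eq_zero D hy
    have hmem : ∀ n : ℤ, ∃ a : (D (n + 1 + 1) : Type u), d (n + 1) a = y n :=
      fun n => (hex n (y n)).mp (sumD_comp_eq_zero D d hGy n)
    choose w hw using hmem
    refine ⟨∑ n ∈ y.support,
      DirectSum.lof R ℤ (fun n => (D (n + 1) : Type u)) (n + 1) (w n), ?_⟩
    rw [map_sum]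
    refine Eq.trans (Finset.sum_congr rfl fun n _ => ?_) (DirectSum.sum_support_of y)
    rw [fShift_lof_succ, hw, DirectSum.lof_eq_of]
  · rintro ⟨x, rfl⟩
    exact DFunLike.congr_fun (fShift_sq_zero D d hex) x

theorem fShift_hom_exact (hex : ∀ n : ℤ, Function.Exact (d (n + 1)) (d n)) {F : Type u} [AddCommGroup F] [Module R F]
    (hhomF : ∀ n : ℤ, Function.Exact
      (fun g : (D n : Type u) →ₗ[R] F => g ∘ₗ d n)
      (fun g : (D (n + 1) : Type u) →ₗ[R] F => g ∘ₗ d (n + 1))) :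
    Function.Exact
      (fun g : (⨁ n : ℤ, (D (n + 1) : Type u)) →ₗ[R] F => g ∘ₗ fShift D d)
      (fun g : (⨁ n : ℤ, (D (n + 1) : Type u)) →ₗ[R] F => g ∘ₗ fShift D d) := by
  intro g
  constructor
  · intro hg
    replace hg : g ∘ₗ fShift D d = 0 := hg
    have hgk : ∀ k : ℤ,
        (g ∘ₗ DirectSum.lof R ℤ (fun n => (D (n + 1) : Type u)) k) ∘ₗ d (k + 1) = 0 := by
      intro k
      ext x
      have h1 := DFunLike.congr_fun hg
        (DirectSum.lof R ℤ (fun n => (D (n + 1) : Type u)) (k + 1) x)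
      simp only [LinearMap.comp_apply, LinearMap.zero_apply] at h1 ⊢
      rw [fShift_lof_succ] at h1
      exact h1
    have hexk : ∀ k : ℤ, ∃ hk : (D k : Type u) →ₗ[R] F,
        hk ∘ₗ d k = g ∘ₗ DirectSum.lof R ℤ (fun n => (D (n + 1) : Type u)) k :=
      fun k => (hhomF k (g ∘ₗ DirectSum.lof R ℤ (fun n => (D (n + 1) : Type u)) k)).mp (hgk k)
    choose hk hhk using hexk
    refine ⟨DirectSum.toModule R ℤ F (fun m => hk (m + 1)), ?_⟩
    show DirectSum.toModule R ℤ F (fun m => hk (m + 1)) ∘ₗ fShift D d = g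
    apply DirectSum.linearMap_ext
    intro m
    ext x
    obtain ⟨k, rfl⟩ : ∃ k, m = k + 1 := ⟨m - 1, by ring⟩
    simp only [LinearMap.comp_apply]
    rw [fShift_lof_succ, DirectSum.toModule_lof]
    exact DFunLike.congr_fun (hhk (k + 1)) x
  · rintro ⟨H, hH⟩
    show g ∘ₗ fShift D d = 0
    rw [← hH]
    show (H ∘ₗ fShift D d) ∘ₗ fShift D d = 0
    rw [LinearMap.comp_assoc, fShift_sq_zero D d hex, LinearMap.comp_zero]

theorem ker_fShift_eq :
    LinearMap.ker (DFinsupp.mapRange.linearMap d) = LinearMap.ker (fShift D d) := by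
  ext x
  simp only [LinearMap.mem_ker]
  constructor
  · intro h0
    show shiftL D (sumD D d x) = 0
    rw [show sumD D d x = 0 from h0]
    simp
  · intro h0
    exact shiftL_eq_zero D h0

end DingAuxMore
/-- A two-degree Ding projective module `M` is a direct summand of a
strongly two-degree Ding projective module; in fact, if `⋯ → D₁ → D₀ → D₋₁ → ⋯` is the
defining exact sequence of `M`, then the direct sum of all the kernels of its maps is
strongly two-degree Ding projective and `M` is a direct summand of it. -/
theorem twoDegree_ding_projective_summand_of_strongly (R : Type u) [Ring R]
    (M : Type u) [AddCommGroup M] [Module R M]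
    (D : ℤ → ModuleCat.{u} R) (d : ∀ n : ℤ, (D (n + 1) : Type u) →ₗ[R] D n)
    (hD : ∀ n, IsDingProjective R (D n))
    (hex : ∀ n, Function.Exact (d (n + 1)) (d n))
    (hhom : ∀ (F : Type u) [AddCommGroup F] [Module R F], IsFlatModule R F →
      ∀ n : ℤ, Function.Exact
        (fun g : (D n : Type u) →ₗ[R] F => g ∘ₗ d n)
        (fun g : (D (n + 1) : Type u) →ₗ[R] F => g ∘ₗ d (n + 1)))
    (e : M ≃ₗ[R] LinearMap.ker (d (-1))) :
    IsStronglyTwoDegreeDingProjective R (⨁ n : ℤ, ↥(LinearMap.ker (d n))) ∧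
    ∃ (j : M →ₗ[R] ⨁ n : ℤ, ↥(LinearMap.ker (d n)))
      (p : (⨁ n : ℤ, ↥(LinearMap.ker (d n))) →ₗ[R] M),
      p ∘ₗ j = LinearMap.id := by
  classical
  constructor
  · refine ⟨ModuleCat.of R (⨁ n : ℤ, (D (n + 1) : Type u)), fShift D d, ?_, ?_, ?_, ?_⟩
    · exact isDingProjective_directSum (fun n : ℤ => D (n + 1)) (fun n => hD (n + 1))
    · exact fShift_exact D d hex
    · intro F _ _ hF
      exact fShift_hom_exact D d hex (fun n => hhom F hF n)
    · exact ⟨(DingAux.kerMapRangeEquiv (R := R) (ι := ℤ)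
        (β₁ := fun n => (D (n + 1) : Type u)) (β₂ := fun n => (D n : Type u)) d).trans
        (LinearEquiv.ofEq _ _ (ker_fShift_eq D d))⟩
  · refine ⟨(DirectSum.lof R ℤ (fun n => ↥(LinearMap.ker (d n))) (-1)) ∘ₗ
      (e : M →ₗ[R] ↥(LinearMap.ker (d (-1)))),
      (e.symm : ↥(LinearMap.ker (d (-1))) →ₗ[R] M) ∘ₗ
        DirectSum.component R ℤ (fun n => ↥(LinearMap.ker (d n))) (-1), ?_⟩
    ext m
    simp only [LinearMap.comp_apply, LinearMap.id_apply, LinearEquiv.coe_coe]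
    rw [DirectSum.component.lof_self]
    exact e.symm_apply_apply m
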